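/- Let x_{i−1} < x_i < x_{i+1} and define the Brodlie value ḟ_i^{B} = (wl_i + wr_i)·m_{i−1}·m_i/(wl_i·m_i + wr_i·m_{i−1}) when m_{i−1}·m_i > 0, where wl_i = h_{i−1} + 2·h_i and wr_i = 2·h_{i−1} + h_i. Suppose f is three times continuously differentiable on [x_{i−1}, x_{i+1}], there is δ > 0 with f'(x) ≥ δ for all x ∈ [x_{i−1}, x_{i+1}] (or f'(x) ≤ −δ for all such x), with m_{i−1}, m_i the divided differences of f (so that m_{i−1}·m_i > 0). Then there exists a constant C, depending only on δ and on bounds for |f''| and |f'''| on [x_{i−1}, x_{i+1}], such that: if h_{i−1} = h_i = h then |ḟ_i^{B} − f'(x_i)| ≤ C·h², while in general |ḟ_i^{B} − f'(x_i)| ≤ C·max(h_{i−1}, h_i). -/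

import Mathlib

/-- Brodlie's derivative value: `ḟᵢ^B = (wl + wr)·mᵢ₋₁·mᵢ/(wl·mᵢ + wr·mᵢ₋₁)`
with `wl = hᵢ₋₁ + 2hᵢ`, `wr = 2hᵢ₋₁ + hᵢ`. -/
noncomputable def brodlie (hm hi mm mi : ℝ) : ℝ :=
  ((hm + 2 * hi) + (2 * hm + hi)) * mm * mi / ((hm + 2 * hi) * mi + (2 * hm + hi) * mm)

open Set intervalIntegral MeasureTheory

/-- Integrating a power-type bound on the derivative. -/
lemma quad_bound {a b c K : ℝ} {n : ℕ} (hab : a ≤ b) (hc : c ∈ Set.Icc a b)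
    {g g' : ℝ → ℝ}
    (hg : ∀ x ∈ Set.Icc a b, HasDerivWithinAt g (g' x) (Set.Icc a b) x)
    (hcont : ContinuousOn g' (Set.Icc a b))
    (hbound : ∀ x ∈ Set.Icc a b, |g' x| ≤ K * |x - c| ^ n)
    (hgc : g c = 0) :
    ∀ y ∈ Set.Icc a b, |g y| ≤ K * |y - c| ^ (n + 1) / (n + 1) := by
  intro y hy
  have hgcont : ContinuousOn g (Set.Icc a b) := fun x hx => (hg x hx).continuousWithinAt
  rcases le_total c y with hcy | hyc
  · -- right side
    have hsub : Set.Icc c y ⊆ Set.Icc a b := Set.Icc_subset_Icc hc.1 hy.2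
    have husub : Set.uIcc c y ⊆ Set.Icc a b := by rw [Set.uIcc_of_le hcy]; exact hsub
    have hint : IntervalIntegrable g' volume c y :=
      (hcont.mono husub).intervalIntegrable
    have hftc : ∫ t in c..y, g' t = g y - g c := by
      apply integral_eq_sub_of_hasDeriv_right_of_le hcy (hgcont.mono hsub) _ hint
      intro x hx
      have hxab : x ∈ Set.Ioo a b := ⟨lt_of_le_of_lt hc.1 hx.1, lt_of_lt_of_le hx.2 hy.2⟩
      exact ((hg x (Set.Ioo_subset_Icc_self hxab)).hasDerivAt
        (Icc_mem_nhds hxab.1 hxab.2)).hasDerivWithinAt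
    have h1 : |g y| ≤ ∫ t in c..y, |g' t| := by
      rw [hgc, sub_zero] at hftc
      rw [← hftc]
      simpa using intervalIntegral.norm_integral_le_integral_norm (f := g') (μ := volume) hcy
    have h2 : (∫ t in c..y, |g' t|) ≤ ∫ t in c..y, K * (t - c) ^ n := by
      apply intervalIntegral.integral_mono_on hcy
        ((hcont.mono husub).abs.intervalIntegrable)
        ((Continuous.intervalIntegrable (continuous_const.mul ((continuous_id.sub continuous_const).pow n)) _ _))
      intro t ht
      have h := hbound t (hsub ht)
      rwa [show |t - c| = t - c from abs_of_nonneg (by linarith [ht.1])] at h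
    have h3 : (∫ t in c..y, K * (t - c) ^ n) = K * (y - c) ^ (n + 1) / (n + 1) := by
      rw [intervalIntegral.integral_const_mul]
      have : (∫ t in c..y, (t - c) ^ n) = ∫ s in (c - c)..(y - c), s ^ n :=
        intervalIntegral.integral_comp_sub_right (fun s => s ^ n) c
      rw [this, sub_self, integral_pow]
      push_cast
      ring
    rw [show |y - c| = y - c from abs_of_nonneg (by linarith)]
    calc |g y| ≤ ∫ t in c..y, |g' t| := h1
      _ ≤ ∫ t in c..y, K * (t - c) ^ n := h2
      _ = K * (y - c) ^ (n + 1) / (n + 1) := h3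
  · -- left side
    have hsub : Set.Icc y c ⊆ Set.Icc a b := Set.Icc_subset_Icc hy.1 hc.2
    have husub : Set.uIcc y c ⊆ Set.Icc a b := by rw [Set.uIcc_of_le hyc]; exact hsub
    have hint : IntervalIntegrable g' volume y c :=
      (hcont.mono husub).intervalIntegrable
    have hftc : ∫ t in y..c, g' t = g c - g y := by
      apply integral_eq_sub_of_hasDeriv_right_of_le hyc (hgcont.mono hsub) _ hint
      intro x hx
      have hxab : x ∈ Set.Ioo a b := ⟨lt_of_le_of_lt hy.1 hx.1, lt_of_lt_of_le hx.2 hc.2⟩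
      exact ((hg x (Set.Ioo_subset_Icc_self hxab)).hasDerivAt
        (Icc_mem_nhds hxab.1 hxab.2)).hasDerivWithinAt
    have h1 : |g y| ≤ ∫ t in y..c, |g' t| := by
      rw [hgc, zero_sub] at hftc
      have : |g y| = ‖∫ t in y..c, g' t‖ := by rw [hftc]; simp [Real.norm_eq_abs, abs_neg]
      rw [this]
      simpa using intervalIntegral.norm_integral_le_integral_norm (f := g') (μ := volume) hyc
    have h2 : (∫ t in y..c, |g' t|) ≤ ∫ t in y..c, K * (c - t) ^ n := by
      apply intervalIntegral.integral_mono_on hyc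
        ((hcont.mono husub).abs.intervalIntegrable)
        ((Continuous.intervalIntegrable (continuous_const.mul ((continuous_const.sub continuous_id).pow n)) _ _))
      intro t ht
      have h := hbound t (hsub ht)
      rwa [abs_sub_comm, show |c - t| = c - t from abs_of_nonneg (by linarith [ht.2])] at h
    have h3 : (∫ t in y..c, K * (c - t) ^ n) = K * (c - y) ^ (n + 1) / (n + 1) := by
      rw [intervalIntegral.integral_const_mul]
      have : (∫ t in y..c, (c - t) ^ n) = ∫ s in (c - c)..(c - y), s ^ n :=
        intervalIntegral.integral_comp_sub_left (fun s => s ^ n) c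
      rw [this, sub_self, integral_pow]
      push_cast
      ring
    rw [show |y - c| = c - y by rw [abs_sub_comm]; exact abs_of_nonneg (by linarith)]
    calc |g y| ≤ ∫ t in y..c, |g' t| := h1
      _ ≤ ∫ t in y..c, K * (c - t) ^ n := h2
      _ = K * (c - y) ^ (n + 1) / (n + 1) := h3


-- general first-order bound, positive branch
lemma core1 {h k δ mm mi d e1 e2 : ℝ} (hh : 0 < h) (hk : 0 < k) (hδ : 0 < δ)
    (hmm : δ ≤ mm) (hmi : δ ≤ mi) (h1 : |mm - d| ≤ e1) (h2 : |mi - d| ≤ e2) :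
    |brodlie h k mm mi - d| ≤ 2 * e1 + e2 := by
  have hD : 0 < (h + 2 * k) * mi + (2 * h + k) * mm := by nlinarith
  have hDne : ((h + 2 * k) * mi + (2 * h + k) * mm) ≠ 0 := ne_of_gt hD
  have heq : brodlie h k mm mi - mm
      = mm * (2 * h + k) * (mi - mm) / ((h + 2 * k) * mi + (2 * h + k) * mm) := by
    rw [brodlie, eq_div_iff hDne, sub_mul, div_mul_cancel₀ _ hDne]
    ring
  have hBmm : |brodlie h k mm mi - mm| ≤ |mi - mm| := by
    rw [heq, abs_div, abs_of_pos hD, div_le_iff₀ hD]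
    rw [abs_mul]
    have h3 : |mm * (2 * h + k)| = mm * (2 * h + k) := abs_of_pos (by nlinarith)
    rw [h3]
    nlinarith [mul_nonneg (show (0:ℝ) ≤ (h + 2 * k) * mi by nlinarith) (abs_nonneg (mi - mm))]
  have h4 : |mi - mm| ≤ e1 + e2 := by
    have : mi - mm = (mi - d) - (mm - d) := by ring
    rw [this]
    calc |(mi - d) - (mm - d)| ≤ |mi - d| + |mm - d| := abs_sub _ _
      _ ≤ e1 + e2 := by linarith
  calc |brodlie h k mm mi - d|
      ≤ |brodlie h k mm mi - mm| + |mm - d| := abs_sub_le _ _ _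
    _ ≤ 2 * e1 + e2 := by linarith [hBmm.trans h4]

-- equal spacing, positive branch
lemma core2 {h δ mm mi d e1 e2 S : ℝ} (hh : 0 < h) (hδ : 0 < δ)
    (hmm : δ ≤ mm) (hmi : δ ≤ mi) (h1 : |mm - d| ≤ e1) (h2 : |mi - d| ≤ e2)
    (hS : |mm + mi - 2 * d| ≤ S) :
    |brodlie h h mm mi - d| ≤ S + (e1 * S + 2 * (e1 * e2)) / (2 * δ) := by
  have hP : 0 < mm + mi := by linarith
  have hharm : brodlie h h mm mi = 2 * mm * mi / (mm + mi) := by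
    rw [brodlie]
    rw [div_eq_div_iff (by nlinarith) (by linarith)]
    ring
  have he1 : 0 ≤ e1 := le_trans (abs_nonneg _) h1
  have he2 : 0 ≤ e2 := le_trans (abs_nonneg _) h2
  have hS0 : 0 ≤ S := le_trans (abs_nonneg _) hS
  have hd : |d| ≤ mm + e1 := by
    have := abs_le.1 h1
    rcases le_or_gt 0 d with hd0 | hd0
    · rw [abs_of_nonneg hd0]; linarith
    · rw [abs_of_neg hd0]; linarith
  have heq : (2 * mm * mi / (mm + mi) - d) * (mm + mi)
      = d * (mm + mi - 2 * d) + 2 * ((mm - d) * (mi - d)) := by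
    field_simp
    ring
  have hnum : |d * (mm + mi - 2 * d) + 2 * ((mm - d) * (mi - d))|
      ≤ (mm + mi) * S + (e1 * S + 2 * (e1 * e2)) := by
    calc |d * (mm + mi - 2 * d) + 2 * ((mm - d) * (mi - d))|
        ≤ |d * (mm + mi - 2 * d)| + |2 * ((mm - d) * (mi - d))| := abs_add_le _ _
      _ = |d| * |mm + mi - 2 * d| + 2 * (|mm - d| * |mi - d|) := by
          rw [abs_mul, abs_mul, abs_mul]; simp [abs_of_nonneg]
      _ ≤ (mm + e1) * S + 2 * (e1 * e2) := by
          have := abs_nonneg (mm + mi - 2*d)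
          have := abs_nonneg (mm - d)
          have := abs_nonneg (mi - d)
          have := abs_nonneg d
          nlinarith
      _ ≤ (mm + mi) * S + (e1 * S + 2 * (e1 * e2)) := by nlinarith
  have hkey : |2 * mm * mi / (mm + mi) - d| * (mm + mi)
      ≤ (mm + mi) * S + (e1 * S + 2 * (e1 * e2)) := by
    have h5 : |2 * mm * mi / (mm + mi) - d| * (mm + mi)
        = |(2 * mm * mi / (mm + mi) - d) * (mm + mi)| := by
      rw [abs_mul, abs_of_pos hP]
    rw [h5, heq]
    exact hnum
  rw [hharm]
  have step : |2 * mm * mi / (mm + mi) - d|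
      ≤ S + (e1 * S + 2 * (e1 * e2)) / (mm + mi) := by
    rw [← le_div_iff₀ hP] at hkey
    calc |2 * mm * mi / (mm + mi) - d|
        ≤ ((mm + mi) * S + (e1 * S + 2 * (e1 * e2))) / (mm + mi) := hkey
      _ = S + (e1 * S + 2 * (e1 * e2)) / (mm + mi) := by field_simp
  have hmono : (e1 * S + 2 * (e1 * e2)) / (mm + mi) ≤ (e1 * S + 2 * (e1 * e2)) / (2 * δ) := by
    apply div_le_div_of_nonneg_left (by nlinarith) (by linarith) (by linarith)
  linarith

lemma brodlie_neg (h k mm mi : ℝ) : brodlie h k (-mm) (-mi) = -brodlie h k mm mi := by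
  rw [brodlie, brodlie]
  have : (h + 2 * k) * -mi + (2 * h + k) * -mm = -((h + 2 * k) * mi + (2 * h + k) * mm) := by ring
  rw [this, div_neg]
  ring_nf

-- combined sign versions
lemma core1' {h k δ mm mi d e1 e2 : ℝ} (hh : 0 < h) (hk : 0 < k) (hδ : 0 < δ)
    (hsg : (δ ≤ mm ∧ δ ≤ mi) ∨ (mm ≤ -δ ∧ mi ≤ -δ))
    (h1 : |mm - d| ≤ e1) (h2 : |mi - d| ≤ e2) :
    |brodlie h k mm mi - d| ≤ 2 * e1 + e2 := by
  rcases hsg with ⟨hmm, hmi⟩ | ⟨hmm, hmi⟩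
  · exact core1 hh hk hδ hmm hmi h1 h2
  · have h1' : |(-mm) - (-d)| ≤ e1 := by rw [show -mm - -d = -(mm - d) by ring, abs_neg]; exact h1
    have h2' : |(-mi) - (-d)| ≤ e2 := by rw [show -mi - -d = -(mi - d) by ring, abs_neg]; exact h2
    have := core1 hh hk hδ (by linarith : δ ≤ -mm) (by linarith : δ ≤ -mi) h1' h2'
    rwa [brodlie_neg, show -brodlie h k mm mi - -d = -(brodlie h k mm mi - d) by ring,
      abs_neg] at this

lemma core2' {h δ mm mi d e1 e2 S : ℝ} (hh : 0 < h) (hδ : 0 < δ)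
    (hsg : (δ ≤ mm ∧ δ ≤ mi) ∨ (mm ≤ -δ ∧ mi ≤ -δ))
    (h1 : |mm - d| ≤ e1) (h2 : |mi - d| ≤ e2) (hS : |mm + mi - 2 * d| ≤ S) :
    |brodlie h h mm mi - d| ≤ S + (e1 * S + 2 * (e1 * e2)) / (2 * δ) := by
  rcases hsg with ⟨hmm, hmi⟩ | ⟨hmm, hmi⟩
  · exact core2 hh hδ hmm hmi h1 h2 hS
  · have h1' : |(-mm) - (-d)| ≤ e1 := by rw [show -mm - -d = -(mm - d) by ring, abs_neg]; exact h1
    have h2' : |(-mi) - (-d)| ≤ e2 := by rw [show -mi - -d = -(mi - d) by ring, abs_neg]; exact h2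
    have hS' : |(-mm) + (-mi) - 2 * (-d)| ≤ S := by
      rw [show -mm + -mi - 2 * -d = -(mm + mi - 2 * d) by ring, abs_neg]; exact hS
    have := core2 hh hδ (by linarith : δ ≤ -mm) (by linarith : δ ≤ -mi) h1' h2' hS'
    rwa [brodlie_neg, show -brodlie h h mm mi - -d = -(brodlie h h mm mi - d) by ring,
      abs_neg] at this


set_option maxHeartbeats 2000000 in
/-- Accuracy of Brodlie's formula: for `f ∈ C³` with `f'` bounded away from
zero (so the divided differences have a common sign) there is a constant `C`,
depending only on `δ` and on the bounds `M` for `|f''|` and `|f'''|`, such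
that Brodlie's value is second-order accurate on uniform spacings
(`hᵢ₋₁ = hᵢ`) and first-order accurate in general. -/
theorem brodlie_accuracy (δ M : ℝ) (hδ : 0 < δ) (hM : 0 ≤ M) :
    ∃ C > 0, ∀ (xm xi xp : ℝ) (f : ℝ → ℝ),
      xm < xi → xi < xp →
      ContDiffOn ℝ 3 f (Set.Icc xm xp) →
      ((∀ t ∈ Set.Icc xm xp, δ ≤ derivWithin f (Set.Icc xm xp) t) ∨
        (∀ t ∈ Set.Icc xm xp, derivWithin f (Set.Icc xm xp) t ≤ -δ)) →
      (∀ t ∈ Set.Icc xm xp, |iteratedDerivWithin 2 f (Set.Icc xm xp) t| ≤ M) →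
      (∀ t ∈ Set.Icc xm xp, |iteratedDerivWithin 3 f (Set.Icc xm xp) t| ≤ M) →
      (|brodlie (xi - xm) (xp - xi) ((f xi - f xm) / (xi - xm))
          ((f xp - f xi) / (xp - xi)) - derivWithin f (Set.Icc xm xp) xi|
        ≤ C * max (xi - xm) (xp - xi)) ∧
      (xi - xm = xp - xi →
        |brodlie (xi - xm) (xp - xi) ((f xi - f xm) / (xi - xm))
            ((f xp - f xi) / (xp - xi)) - derivWithin f (Set.Icc xm xp) xi|
          ≤ C * (xp - xi) ^ 2) := by
  refine ⟨3 * M / 2 + M / 3 + M ^ 2 / (3 * δ) + 1, by positivity, ?_⟩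
  intro xm xi xp f hxm hxp hf hsign hb2 hb3
  have hxmp : xm < xp := hxm.trans hxp
  set S : Set ℝ := Set.Icc xm xp with hSdef
  have uniq : UniqueDiffOn ℝ S := uniqueDiffOn_Icc hxmp
  have hxiS : xi ∈ S := ⟨hxm.le, hxp.le⟩
  set d1 : ℝ → ℝ := derivWithin f S with hd1def
  set d2 : ℝ → ℝ := iteratedDerivWithin 2 f S with hd2def
  set d3 : ℝ → ℝ := iteratedDerivWithin 3 f S with hd3def
  set h : ℝ := xi - xm with hhdef
  set k : ℝ := xp - xi with hkdef
  have hh : 0 < h := by rw [hhdef]; linarith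
  have hk : 0 < k := by rw [hkdef]; linarith
  set mm : ℝ := (f xi - f xm) / h with hmmdef
  set mi : ℝ := (f xp - f xi) / k with hmidef
  set d : ℝ := d1 xi with hddef
  set f2 : ℝ := d2 xi with hf2def
  -- derivative chain
  have hfd : ∀ x ∈ S, HasDerivWithinAt f (d1 x) S x := fun x hx =>
    ((hf.differentiableOn (by norm_num)) x hx).hasDerivWithinAt
  have hd1d : ∀ x ∈ S, HasDerivWithinAt d1 (d2 x) S x := by
    intro x hx
    have hdiff : DifferentiableOn ℝ (iteratedDerivWithin 1 f S) S :=
      hf.differentiableOn_iteratedDerivWithin (by norm_num) uniq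
    have h0 : HasDerivWithinAt (iteratedDerivWithin 1 f S)
        (derivWithin (iteratedDerivWithin 1 f S) S x) S x := (hdiff x hx).hasDerivWithinAt
    have h1 : d2 x = derivWithin (iteratedDerivWithin 1 f S) S x :=
      congrFun iteratedDerivWithin_succ x
    rw [← h1] at h0
    exact h0.congr (fun y hy => (congrFun iteratedDerivWithin_one y).symm)
      (congrFun iteratedDerivWithin_one x).symm
  have hd2d : ∀ x ∈ S, HasDerivWithinAt d2 (d3 x) S x := by
    intro x hx
    have hdiff : DifferentiableOn ℝ (iteratedDerivWithin 2 f S) S :=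
      hf.differentiableOn_iteratedDerivWithin (by norm_num) uniq
    have h0 : HasDerivWithinAt (iteratedDerivWithin 2 f S)
        (derivWithin (iteratedDerivWithin 2 f S) S x) S x := (hdiff x hx).hasDerivWithinAt
    have h1 : d3 x = derivWithin (iteratedDerivWithin 2 f S) S x :=
      congrFun iteratedDerivWithin_succ x
    rw [← h1] at h0
    exact h0
  have hc1 : ContinuousOn d1 S := fun x hx => (hd1d x hx).continuousWithinAt
  have hc2 : ContinuousOn d2 S := fun x hx => (hd2d x hx).continuousWithinAt
  have hc3 : ContinuousOn d3 S := hf.continuousOn_iteratedDerivWithin (by norm_num) uniq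
  -- layer 1 : |d2 y - f2| ≤ M |y - xi|
  have lay1 : ∀ y ∈ S, |d2 y - f2| ≤ M * |y - xi| := by
    have q := quad_bound (n := 0) (K := M) (c := xi) hxmp.le hxiS
      (g := fun y => d2 y - f2) (g' := d3)
      (fun x hx => (hd2d x hx).sub_const f2) hc3
      (fun x hx => by simpa using hb3 x hx) (by simp [hf2def])
    intro y hy
    have := q y hy
    norm_num at this
    exact this
  -- layer 2b : |d1 y - d| ≤ M |y - xi|
  have lay2b : ∀ y ∈ S, |d1 y - d| ≤ M * |y - xi| := by
    have q := quad_bound (n := 0) (K := M) (c := xi) hxmp.le hxiS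
      (g := fun y => d1 y - d) (g' := d2)
      (fun x hx => (hd1d x hx).sub_const d) hc2
      (fun x hx => by simpa using hb2 x hx) (by simp [hddef])
    intro y hy
    have := q y hy
    norm_num at this
    exact this
  -- layer 2 : |d1 y - d - (y - xi) f2| ≤ M |y - xi|^2 / 2
  have lay2 : ∀ y ∈ S, |d1 y - d - (y - xi) * f2| ≤ M * |y - xi| ^ 2 / 2 := by
    have q := quad_bound (n := 1) (K := M) (c := xi) hxmp.le hxiS
      (g := fun y => d1 y - d - (y - xi) * f2) (g' := fun x => d2 x - f2)
      (fun x hx => by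
        have hq := ((hd1d x hx).sub_const d).sub
          (((hasDerivWithinAt_id x S).sub_const xi).mul_const f2)
        refine hq.congr_deriv ?_
        ring)
      (hc2.sub continuousOn_const)
      (fun x hx => by simpa using lay1 x hx) (by simp [hddef])
    intro y hy
    have := q y hy
    norm_num at this
    rw [sq_abs]
    exact this
  -- layer 3b : |f y - f xi - (y - xi) d| ≤ M |y - xi|^2 / 2
  have lay3b : ∀ y ∈ S, |f y - f xi - (y - xi) * d| ≤ M * |y - xi| ^ 2 / 2 := by
    have q := quad_bound (n := 1) (K := M) (c := xi) hxmp.le hxiS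
      (g := fun y => f y - f xi - (y - xi) * d) (g' := fun x => d1 x - d)
      (fun x hx => by
        have hq := ((hfd x hx).sub_const (f xi)).sub
          (((hasDerivWithinAt_id x S).sub_const xi).mul_const d)
        refine hq.congr_deriv ?_
        ring)
      (hc1.sub continuousOn_const)
      (fun x hx => by simpa using lay2b x hx) (by simp)
    intro y hy
    have := q y hy
    norm_num at this
    rw [sq_abs]
    exact this
  -- layer 3 : |f y - f xi - (y - xi) d - (y - xi)^2 (f2/2)| ≤ M |y - xi|^3 / 6
  have lay3 : ∀ y ∈ S, |f y - f xi - (y - xi) * d - (y - xi) ^ 2 * (f2 / 2)|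
      ≤ M * |y - xi| ^ 3 / 6 := by
    have q := quad_bound (n := 2) (K := M / 2) (c := xi) hxmp.le hxiS
      (g := fun y => f y - f xi - (y - xi) * d - (y - xi) ^ 2 * (f2 / 2))
      (g' := fun x => d1 x - d - (x - xi) * f2)
      (fun x hx => by
        have hq := (((hfd x hx).sub_const (f xi)).sub
          (((hasDerivWithinAt_id x S).sub_const xi).mul_const d)).sub
          ((((hasDerivWithinAt_id x S).sub_const xi).pow 2).mul_const (f2 / 2))
        refine hq.congr_deriv ?_
        norm_num
        ring)
      ((hc1.sub continuousOn_const).sub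
        (((continuous_id.sub continuous_const).mul continuous_const).continuousOn))
      (fun x hx => by
        have := lay2 x hx
        calc |d1 x - d - (x - xi) * f2| ≤ M * |x - xi| ^ 2 / 2 := this
          _ = M / 2 * |x - xi| ^ 2 := by ring)
      (by simp)
    intro y hy
    have h7 := q y hy
    norm_num at h7
    linarith [h7]
  have hxmS : xm ∈ S := ⟨le_refl _, hxmp.le⟩
  have hxpS : xp ∈ S := ⟨hxmp.le, le_refl _⟩
  have habsm : |xm - xi| = h := by
    rw [abs_sub_comm, hhdef]; exact abs_of_pos hh
  have habsp : |xp - xi| = k := by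
    rw [hkdef]; exact abs_of_pos hk
  -- first order errors
  have hme : |mm - d| ≤ M * h / 2 := by
    have hb := lay3b xm hxmS
    rw [habsm] at hb
    have heq2 : mm - d = -(f xm - f xi - (xm - xi) * d) / h := by
      rw [eq_div_iff hh.ne', hmmdef, sub_mul, div_mul_cancel₀ _ hh.ne', hhdef]
      ring
    rw [heq2, abs_div, abs_neg, abs_of_pos hh, div_le_iff₀ hh]
    nlinarith
  have hmie : |mi - d| ≤ M * k / 2 := by
    have hb := lay3b xp hxpS
    rw [habsp] at hb
    have heq2 : mi - d = (f xp - f xi - (xp - xi) * d) / k := by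
      rw [eq_div_iff hk.ne', hmidef, sub_mul, div_mul_cancel₀ _ hk.ne', hkdef]
      ring
    rw [heq2, abs_div, abs_of_pos hk, div_le_iff₀ hk]
    nlinarith
  -- second order errors
  have hA : |mm - d + h / 2 * f2| ≤ M * h ^ 2 / 6 := by
    have hb := lay3 xm hxmS
    rw [habsm] at hb
    have heq2 : mm - d + h / 2 * f2
        = -(f xm - f xi - (xm - xi) * d - (xm - xi) ^ 2 * (f2 / 2)) / h := by
      rw [eq_div_iff hh.ne', hmmdef, add_mul, sub_mul, div_mul_cancel₀ _ hh.ne', hhdef]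
      ring
    rw [heq2, abs_div, abs_neg, abs_of_pos hh, div_le_iff₀ hh]
    nlinarith
  have hB : |mi - d - k / 2 * f2| ≤ M * k ^ 2 / 6 := by
    have hb := lay3 xp hxpS
    rw [habsp] at hb
    have heq2 : mi - d - k / 2 * f2
        = (f xp - f xi - (xp - xi) * d - (xp - xi) ^ 2 * (f2 / 2)) / k := by
      rw [eq_div_iff hk.ne', hmidef, sub_mul, sub_mul, div_mul_cancel₀ _ hk.ne', hkdef]
      ring
    rw [heq2, abs_div, abs_of_pos hk, div_le_iff₀ hk]
    nlinarith
  -- sign information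
  have hsg : (δ ≤ mm ∧ δ ≤ mi) ∨ (mm ≤ -δ ∧ mi ≤ -δ) := by
    obtain ⟨c1, hc1m, hs1⟩ := exists_hasDerivAt_eq_slope f d1 hxm
      (hf.continuousOn.mono (Set.Icc_subset_Icc le_rfl hxp.le))
      (fun x hx => (hfd x ⟨hx.1.le, (hx.2.trans hxp).le⟩).hasDerivAt
        (Icc_mem_nhds hx.1 (hx.2.trans hxp)))
    obtain ⟨c2, hc2m, hs2⟩ := exists_hasDerivAt_eq_slope f d1 hxp
      (hf.continuousOn.mono (Set.Icc_subset_Icc hxm.le le_rfl))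
      (fun x hx => (hfd x ⟨(hxm.trans hx.1).le, hx.2.le⟩).hasDerivAt
        (Icc_mem_nhds (hxm.trans hx.1) hx.2))
    have hc1S : c1 ∈ S := ⟨hc1m.1.le, (hc1m.2.trans hxp).le⟩
    have hc2S : c2 ∈ S := ⟨(hxm.trans hc2m.1).le, hc2m.2.le⟩
    have hmm1 : mm = d1 c1 := by rw [hmmdef, hhdef, hs1]
    have hmi1 : mi = d1 c2 := by rw [hmidef, hkdef, hs2]
    rcases hsign with hp | hn
    · left; exact ⟨hmm1 ▸ hp c1 hc1S, hmi1 ▸ hp c2 hc2S⟩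
    · right; exact ⟨hmm1 ▸ hn c1 hc1S, hmi1 ▸ hn c2 hc2S⟩
  -- first claim
  have key1 : |brodlie h k mm mi - d| ≤ 2 * (M * h / 2) + M * k / 2 :=
    core1' hh hk hδ hsg hme hmie
  clear_value S d1 d2 d3 h k mm mi d f2
  have hmaxh : h ≤ max h k := le_max_left h k
  have hmaxk : k ≤ max h k := le_max_right h k
  have hmaxpos : 0 < max h k := lt_of_lt_of_le hh hmaxh
  constructor
  · have hC0 : 0 ≤ (M / 3 + M ^ 2 / (3 * δ) + 1) * max h k := by positivity
    have h1 : M * h ≤ M * max h k := mul_le_mul_of_nonneg_left hmaxh hM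
    have h2 : M * k ≤ M * max h k := mul_le_mul_of_nonneg_left hmaxk hM
    calc |brodlie h k mm mi - d| ≤ 2 * (M * h / 2) + M * k / 2 := key1
      _ ≤ (3 * M / 2) * max h k := by linarith
      _ ≤ (3 * M / 2 + M / 3 + M ^ 2 / (3 * δ) + 1) * max h k := by linarith [hC0]
  · intro heq
    rw [← heq] at hmie hB ⊢
    have hS2 : |mm + mi - 2 * d| ≤ M * h ^ 2 / 3 := by
      have := abs_add_le (mm - d + h / 2 * f2) (mi - d - h / 2 * f2)
      have he : mm - d + h / 2 * f2 + (mi - d - h / 2 * f2) = mm + mi - 2 * d := by ring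
      rw [he] at this
      calc |mm + mi - 2 * d| ≤ |mm - d + h / 2 * f2| + |mi - d - h / 2 * f2| := this
        _ ≤ M * h ^ 2 / 6 + M * h ^ 2 / 6 := by linarith
        _ = M * h ^ 2 / 3 := by ring
    have key2 := core2' hh hδ hsg hme hmie hS2
    rcases le_total h 1 with hsml | hbig
    · have hh3 : h ^ 3 ≤ h ^ 2 := by nlinarith
      have hE : (M * h / 2 * (M * h ^ 2 / 3) + 2 * (M * h / 2 * (M * h / 2))) / (2 * δ)
          ≤ M ^ 2 / (3 * δ) * h ^ 2 := by
        rw [div_le_iff₀ (by linarith : (0:ℝ) < 2 * δ)]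
        have hrw : M ^ 2 / (3 * δ) * h ^ 2 * (2 * δ) = 2 / 3 * M ^ 2 * h ^ 2 := by
          field_simp
        rw [hrw]
        have : M ^ 2 * h ^ 3 ≤ M ^ 2 * h ^ 2 :=
          mul_le_mul_of_nonneg_left hh3 (by positivity)
        linarith
      calc |brodlie h h mm mi - d|
          ≤ M * h ^ 2 / 3 + (M * h / 2 * (M * h ^ 2 / 3)
            + 2 * (M * h / 2 * (M * h / 2))) / (2 * δ) := key2
        _ ≤ M * h ^ 2 / 3 + M ^ 2 / (3 * δ) * h ^ 2 := by linarith
        _ ≤ (3 * M / 2 + M / 3 + M ^ 2 / (3 * δ) + 1) * h ^ 2 := by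
            have p1 : 0 ≤ M * h ^ 2 := by positivity
            have p2 : 0 ≤ h ^ 2 := sq_nonneg h
            linarith
    · have key1' : |brodlie h h mm mi - d| ≤ 2 * (M * h / 2) + M * h / 2 := by
        rw [← heq] at key1; exact key1
      have hh2 : h ≤ h ^ 2 := by nlinarith
      calc |brodlie h h mm mi - d| ≤ 2 * (M * h / 2) + M * h / 2 := key1'
        _ = 3 * M / 2 * h := by ring
        _ ≤ 3 * M / 2 * h ^ 2 := by
            have := mul_le_mul_of_nonneg_left hh2 (show (0:ℝ) ≤ 3 * M / 2 by linarith)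
            linarith
        _ ≤ (3 * M / 2 + M / 3 + M ^ 2 / (3 * δ) + 1) * h ^ 2 := by
            have p1 : 0 ≤ M * h ^ 2 := by positivity
            have p2 : 0 ≤ h ^ 2 := sq_nonneg h
            have p3 : 0 ≤ M ^ 2 / (3 * δ) * h ^ 2 := by positivity
            linarith
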